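/- A signed graph is balanced (contains no negative cycle) if and only if there exists a subset S of its vertices such that switching at all vertices of S makes every edge positive; equivalently, if and only if the set of negative edges forms an edge cut. -/

import Mathlib

/-- A signed (multi)graph: an edge set with endpoints (an unordered pair,
possibly a loop) and a sign for each edge (`neg e = true` means `e` is negative). -/
structure SGraph (V : Type) where
  E : Type
  ends : E → Sym2 V
  neg : E → Bool

namespace SGraph

variable {V W : Type}

/-- Walks in a signed multigraph, recorded as sequences of edges. -/
inductive Walk (G : SGraph V) : V → V → Type where
  | nil {v : V} : Walk G v v
  | cons {u v w : V} (e : G.E) (h : G.ends e = s(u, v)) (p : Walk G v w) : Walk G u w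

namespace Walk

variable {G : SGraph V}

/-- The list of edges of a walk. -/
def edges : {u v : V} → G.Walk u v → List G.E
  | _, _, .nil => []
  | _, _, .cons e _ p => e :: p.edges

/-- The list of vertices visited by a walk (in order, with repetitions). -/
def support : {u v : V} → G.Walk u v → List V
  | u, _, .nil => [u]
  | u, _, .cons _ _ p => u :: p.support

/-- A walk is negative if it uses an odd number of negative edges
(its sign, the product of the signs of its edges with multiplicity, is `-1`). -/
def isNeg {u v : V} (p : G.Walk u v) : Bool :=
  (p.edges.map G.neg).foldr Bool.xor false

/-- A closed walk is a cycle if it has at least one edge, no repeated edge,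
and no repeated vertex (except the initial vertex which is also final). -/
def IsCycle {v : V} (p : G.Walk v v) : Prop :=
  p.edges ≠ [] ∧ p.edges.Nodup ∧ p.support.tail.Nodup

/-- The internal vertices of a walk. -/
def inner {u v : V} (p : G.Walk u v) : List V :=
  p.support.tail.dropLast

end Walk

/-- A set of vertices is balanced if it induces no negative cycle. -/
def BalancedSet (G : SGraph V) (X : Set V) : Prop :=
  ∀ (v : V) (p : G.Walk v v), p.IsCycle → (∀ u ∈ p.support, u ∈ X) → p.isNeg = false

/-- A signed graph is balanced if it contains no negative cycle. -/
def IsBalanced (G : SGraph V) : Prop := G.BalancedSet Set.univ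

/-- The signed graph has a negative loop. -/
def HasNegLoop (G : SGraph V) : Prop :=
  ∃ e : G.E, (∃ v : V, G.ends e = s(v, v)) ∧ G.neg e = true

/-- The signed graph has a positive loop. -/
def HasPosLoop (G : SGraph V) : Prop :=
  ∃ e : G.E, (∃ v : V, G.ends e = s(v, v)) ∧ G.neg e = false

/-- A balanced `k`-coloring: a partition of the vertices into `k` balanced color classes. -/
def ColorableB (G : SGraph V) (k : ℕ) : Prop :=
  ∃ c : V → Fin k, ∀ i : Fin k, G.BalancedSet {v | c v = i}

/-- The balanced chromatic number. -/
noncomputable def chromNumB (G : SGraph V) : ℕ∞ :=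
  ⨅ n ∈ {n : ℕ | G.ColorableB n}, (n : ℕ∞)

/-- Switching at the set of vertices where `s` is `true`: the sign of an edge is
multiplied by `-1` once for each of its endpoints (with multiplicity) in the set;
thus an edge with exactly one endpoint in the set changes sign, and loops are unchanged. -/
def switch (G : SGraph V) (s : V → Bool) : SGraph V where
  E := G.E
  ends := G.ends
  neg e := Bool.xor (G.neg e)
    (Sym2.lift ⟨fun u v => Bool.xor (s u) (s v), fun u v => Bool.xor_comm _ _⟩ (G.ends e))

/-- The negation of a signature. -/
def negate (G : SGraph V) : SGraph V where
  E := G.E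
  ends := G.ends
  neg e := !(G.neg e)

/-- A set of vertices is connected via positive edges inside itself. -/
def PosConnected (G : SGraph V) (B : Set V) : Prop :=
  B.Nonempty ∧ ∀ u ∈ B, ∀ v ∈ B, ∃ p : G.Walk u v,
    (∀ x ∈ p.support, x ∈ B) ∧ ∀ e ∈ p.edges, G.neg e = false

/-- `H` is a minor of `G`: after a suitable switching of `G`, there are disjoint
branch sets (each connected via positive edges) for the vertices of `H`, and
distinct edges of `G`, with the correct signs, realizing the edges of `H`. -/
def IsMinor (H : SGraph W) (G : SGraph V) : Prop :=
  ∃ s : V → Bool, ∃ B : W → Set V,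
    (∀ x : W, (G.switch s).PosConnected (B x)) ∧
    (Pairwise fun x y => Disjoint (B x) (B y)) ∧
    ∃ η : H.E → G.E, Function.Injective η ∧
      ∀ (e : H.E) (x y : W), H.ends e = s(x, y) →
        (G.switch s).neg (η e) = H.neg e ∧
        ∃ u v : V, G.ends (η e) = s(u, v) ∧ u ∈ B x ∧ v ∈ B y

/-- A homomorphism of signed graphs: after a suitable switching of the source,
a map of vertices and edges preserving incidences and signs. -/
def HomTo (G : SGraph V) (H : SGraph W) : Prop :=
  ∃ s : V → Bool, ∃ f : V → W, ∃ g : G.E → H.E,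
    ∀ (e : G.E) (u v : V), G.ends e = s(u, v) →
      H.ends (g e) = s(f u, f v) ∧ H.neg (g e) = (G.switch s).neg e

/-- A subdivision of `H` is isomorphic to a subgraph of `G` (signs ignored):
an injection of the vertices of `H` together with internally disjoint,
edge-disjoint paths of `G` realizing the edges of `H`. -/
def IsSubdivisionOf (H : SGraph W) (G : SGraph V) : Prop :=
  ∃ (φ : W → V) (ep : H.E → W × W),
    Function.Injective φ ∧
    (∀ e : H.E, H.ends e = s((ep e).1, (ep e).2)) ∧
    ∃ P : (e : H.E) → G.Walk (φ (ep e).1) (φ (ep e).2),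
      (∀ e, (P e).support.Nodup) ∧
      (∀ e f, e ≠ f → ∀ x ∈ (P e).inner, x ∉ (P f).support) ∧
      (∀ e, ∀ x ∈ (P e).inner, x ∉ Set.range φ) ∧
      (∀ e f, e ≠ f → ∀ g ∈ (P e).edges, g ∉ (P f).edges)

/-- `H` is a total topological minor of `G`: a subdivision of `H` occurs as a
subgraph of `G` in which the path representing each edge `e` of `H` has sign
exactly the sign of `e`. -/
def IsTotalTopMinor (H : SGraph W) (G : SGraph V) : Prop :=
  ∃ (φ : W → V) (ep : H.E → W × W),
    Function.Injective φ ∧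
    (∀ e : H.E, H.ends e = s((ep e).1, (ep e).2)) ∧
    ∃ P : (e : H.E) → G.Walk (φ (ep e).1) (φ (ep e).2),
      (∀ e, (P e).support.Nodup) ∧
      (∀ e f, e ≠ f → ∀ x ∈ (P e).inner, x ∉ (P f).support) ∧
      (∀ e, ∀ x ∈ (P e).inner, x ∉ Set.range φ) ∧
      (∀ e f, e ≠ f → ∀ g ∈ (P e).edges, g ∉ (P f).edges) ∧
      (∀ e, (P e).isNeg = H.neg e)

/-- `H` is a topological minor of `G`: some subdivision of `H` occurs as a subgraph
of `G` in which every cycle of `H` keeps its sign; equivalently, after a suitable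
switching of `H`, `H` is a total topological minor of `G`. -/
def IsTopMinor (H : SGraph W) (G : SGraph V) : Prop :=
  ∃ s : W → Bool, (H.switch s).IsTotalTopMinor G

end SGraph

open SGraph

/-- The signed graph `G̃` obtained from a graph `G` by replacing each edge by a
pair of parallel edges, one positive and one negative. -/
def SimpleGraph.tildeS {V : Type} (G : SimpleGraph V) : SGraph V where
  E := G.edgeSet × Bool
  ends e := (e.1 : Sym2 V)
  neg e := e.2

/-- The all-negative signed graph `(G, -)` on a graph `G`. -/
def SimpleGraph.allNeg {V : Type} (G : SimpleGraph V) : SGraph V where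
  E := G.edgeSet
  ends e := (e : Sym2 V)
  neg _ := true

/-- `K̃_k`: the signed graph on `k` vertices with a positive and a negative edge
between each pair of distinct vertices. -/
def tildeK (k : ℕ) : SGraph (Fin k) := (⊤ : SimpleGraph (Fin k)).tildeS

/-- `(K_k, -)`: the all-negative complete signed graph on `k` vertices. -/
def allNegK (k : ℕ) : SGraph (Fin k) := (⊤ : SimpleGraph (Fin k)).allNeg

/-- `K̃_k⁺`: as `K̃_k`, with in addition a positive loop at every vertex. -/
def tildeKplus (k : ℕ) : SGraph (Fin k) where
  E := ((⊤ : SimpleGraph (Fin k)).edgeSet × Bool) ⊕ Fin k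
  ends := Sum.elim (fun e => (e.1 : Sym2 (Fin k))) (fun i => s(i, i))
  neg := Sum.elim (fun e => e.2) (fun _ => false)

/-- `G` has a `K_k`-minor: `k` disjoint connected branch sets, pairwise joined by an edge. -/
def SimpleGraph.HasCliqueMinor {V : Type} (G : SimpleGraph V) (k : ℕ) : Prop :=
  ∃ T : Fin k → G.Subgraph,
    (∀ i, (T i).coe.Connected) ∧
    (Pairwise fun i j => Disjoint (T i).verts (T j).verts) ∧
    ∀ i j, i ≠ j → ∃ u v, G.Adj u v ∧ u ∈ (T i).verts ∧ v ∈ (T j).verts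

/-- `G` has an odd-`K_k`-minor: a 2-coloring of the vertices together with `k`
disjoint trees, all of whose edges are properly colored, pairwise joined by a
monochromatic edge. -/
def SimpleGraph.HasOddCliqueMinor {V : Type} (G : SimpleGraph V) (k : ℕ) : Prop :=
  ∃ c : V → Bool, ∃ T : Fin k → G.Subgraph,
    (∀ i, (T i).coe.IsTree) ∧
    (Pairwise fun i j => Disjoint (T i).verts (T j).verts) ∧
    (∀ i, ∀ u v, (T i).Adj u v → c u ≠ c v) ∧
    ∀ i j, i ≠ j →
      ∃ u v, G.Adj u v ∧ u ∈ (T i).verts ∧ v ∈ (T j).verts ∧ c u = c v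

/-- `G` has an even-odd-`K_k`-minor: as an odd-`K_k`-minor, with in addition a
properly colored edge between each pair of distinct trees. -/
def SimpleGraph.HasEvenOddCliqueMinor {V : Type} (G : SimpleGraph V) (k : ℕ) : Prop :=
  ∃ c : V → Bool, ∃ T : Fin k → G.Subgraph,
    (∀ i, (T i).coe.IsTree) ∧
    (Pairwise fun i j => Disjoint (T i).verts (T j).verts) ∧
    (∀ i, ∀ u v, (T i).Adj u v → c u ≠ c v) ∧
    ∀ i j, i ≠ j →
      (∃ u v, G.Adj u v ∧ u ∈ (T i).verts ∧ v ∈ (T j).verts ∧ c u = c v) ∧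
      (∃ u v, G.Adj u v ∧ u ∈ (T i).verts ∧ v ∈ (T j).verts ∧ c u ≠ c v)

/-- The fractional chromatic number of a finite graph: the infimum total weight of
a system of nonnegative weights on independent sets covering every vertex with
total weight at least 1. -/
noncomputable def SimpleGraph.fracChrom {V : Type} [Fintype V] [DecidableEq V]
    (G : SimpleGraph V) : ℝ :=
  sInf {r : ℝ | ∃ w : Finset V → ℝ, (∀ A, 0 ≤ w A) ∧
    (∀ A : Finset V, w A ≠ 0 → (∀ u ∈ A, ∀ v ∈ A, ¬G.Adj u v)) ∧
    (∀ v : V, 1 ≤ ∑ A : Finset V, if v ∈ A then w A else 0) ∧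
    ∑ A : Finset V, w A ≤ r}

/-- The fractional balanced chromatic number of a finite signed graph: the infimum
total weight of a system of nonnegative weights on balanced sets covering every
vertex with total weight at least 1. -/
noncomputable def SGraph.fracChromB {V : Type} [Fintype V] [DecidableEq V]
    (G : SGraph V) : ℝ :=
  sInf {r : ℝ | ∃ w : Finset V → ℝ, (∀ A, 0 ≤ w A) ∧
    (∀ A : Finset V, w A ≠ 0 → G.BalancedSet ↑A) ∧
    (∀ v : V, 1 ≤ ∑ A : Finset V, if v ∈ A then w A else 0) ∧
    ∑ A : Finset V, w A ≤ r}


namespace SGraph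

variable {V : Type} {G : SGraph V}

/-- Sign of a list of edges. -/
def eSign (G : SGraph V) (l : List G.E) : Bool := (l.map G.neg).foldr Bool.xor false

@[simp] lemma eSign_nil : G.eSign [] = false := rfl

@[simp] lemma eSign_cons (e : G.E) (l : List G.E) :
    G.eSign (e :: l) = Bool.xor (G.neg e) (G.eSign l) := rfl

@[simp] lemma eSign_append (l1 l2 : List G.E) :
    G.eSign (l1 ++ l2) = Bool.xor (G.eSign l1) (G.eSign l2) := by
  induction l1 with
  | nil => simp
  | cons e l ih => simp [ih, Bool.xor_assoc]

namespace Walk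

@[simp] lemma edges_nil {v : V} : (Walk.nil : G.Walk v v).edges = [] := rfl

@[simp] lemma edges_cons {u v w : V} (e : G.E) (h : G.ends e = s(u, v)) (p : G.Walk v w) :
    (Walk.cons e h p).edges = e :: p.edges := rfl

@[simp] lemma support_nil {v : V} : (Walk.nil : G.Walk v v).support = [v] := rfl

@[simp] lemma support_cons {u v w : V} (e : G.E) (h : G.ends e = s(u, v)) (p : G.Walk v w) :
    (Walk.cons e h p).support = u :: p.support := rfl

lemma isNeg_eq {u v : V} (p : G.Walk u v) : p.isNeg = G.eSign p.edges := rfl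

lemma support_eq_cons {u v : V} (p : G.Walk u v) : p.support = u :: p.support.tail := by
  cases p <;> rfl

lemma support_ne_nil {u v : V} (p : G.Walk u v) : p.support ≠ [] := by
  cases p <;> simp

lemma start_mem_support {u v : V} (p : G.Walk u v) : u ∈ p.support := by
  rw [p.support_eq_cons]; exact List.mem_cons_self

/-- Concatenation of walks. -/
def append : {u v w : V} → G.Walk u v → G.Walk v w → G.Walk u w
  | _, _, _, .nil, q => q
  | _, _, _, .cons e h p, q => .cons e h (p.append q)

@[simp] lemma append_edges : ∀ {u v w : V} (p : G.Walk u v) (q : G.Walk v w),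
    (p.append q).edges = p.edges ++ q.edges
  | _, _, _, .nil, _ => rfl
  | _, _, _, .cons e h p, q => by simp [append, append_edges p q]

/-- Reversal of a walk. -/
def reverse : {u v : V} → G.Walk u v → G.Walk v u
  | _, _, .nil => .nil
  | _, _, .cons e h p => p.reverse.append (.cons e (by rw [h, Sym2.eq_swap]) .nil)

lemma reverse_eSign : ∀ {u v : V} (p : G.Walk u v), G.eSign p.reverse.edges = G.eSign p.edges
  | _, _, .nil => rfl
  | _, _, .cons e h p => by
      simp only [reverse, append_edges, eSign_append, reverse_eSign p, edges_cons, eSign_cons,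
        edges_nil, eSign_nil]
      cases G.neg e <;> cases G.eSign p.edges <;> rfl

@[simp] lemma reverse_isNeg {u v : V} (p : G.Walk u v) : p.reverse.isNeg = p.isNeg := by
  simp [isNeg_eq, reverse_eSign]

lemma mem_support_of_mem_edges : ∀ {u v : V} (p : G.Walk u v) (e : G.E) (x : V),
    e ∈ p.edges → x ∈ G.ends e → x ∈ p.support
  | _, _, .nil, e, x, he, _ => by simp at he
  | u, v, .cons f hf p, e, x, he, hx => by
      simp only [edges_cons, List.mem_cons] at he
      rcases he with rfl | he
      · rw [hf, Sym2.mem_iff] at hx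
        rcases hx with rfl | rfl
        · exact start_mem_support _
        · simp [p.start_mem_support]
      · simp [mem_support_of_mem_edges p e x he hx]

lemma edges_nodup_of_support_nodup : ∀ {u v : V} (p : G.Walk u v),
    p.support.Nodup → p.edges.Nodup
  | _, _, .nil, _ => by simp
  | u, v, .cons e h p, hnd => by
      simp only [support_cons, List.nodup_cons] at hnd
      simp only [edges_cons, List.nodup_cons]
      refine ⟨fun he => hnd.1 ?_, edges_nodup_of_support_nodup p hnd.2⟩
      exact p.mem_support_of_mem_edges e u he (by rw [h]; simp)

lemma eq_cons_of_mem_edges : ∀ {a b : V} (q : G.Walk a b), q.support.Nodup →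
    ∀ e : G.E, e ∈ q.edges → a ∈ G.ends e →
    ∃ (c : V) (h' : G.ends e = s(a, c)) (q' : G.Walk c b), q = .cons e h' q'
  | _, _, .nil, _, e, he, _ => by simp at he
  | a, b, .cons f hf q, hnd, e, he, ha => by
      simp only [edges_cons, List.mem_cons] at he
      rcases he with rfl | he
      · exact ⟨_, hf, q, rfl⟩
      · exfalso
        simp only [support_cons, List.nodup_cons] at hnd
        exact hnd.1 (q.mem_support_of_mem_edges e a he ha)

lemma split_at : ∀ {u w : V} (p : G.Walk u w) (x : V), x ∈ p.support →
    ∃ (p1 : G.Walk u x) (p2 : G.Walk x w),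
      p1.edges ++ p2.edges = p.edges ∧
      p1.support.dropLast ++ p2.support = p.support ∧
      x ∉ p1.support.dropLast
  | u, _, .nil, x, hx => by
      simp only [support_nil, List.mem_singleton] at hx
      subst hx
      exact ⟨.nil, .nil, by simp, by simp, by simp⟩
  | u, w, .cons e h p, x, hx => by
      by_cases hxu : x = u
      · subst hxu
        exact ⟨(Walk.nil : G.Walk x x), .cons e h p, by simp, by simp, by simp⟩
      · have hx' : x ∈ p.support := by
          simp only [support_cons, List.mem_cons] at hx
          tauto
        obtain ⟨p1, p2, he, hs, hnx⟩ := split_at p x hx'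
        refine ⟨.cons e h p1, p2, by simp [he], ?_, ?_⟩
        · have : (Walk.cons e h p1).support.dropLast = u :: p1.support.dropLast := by
            rw [support_cons, List.dropLast_cons_of_ne_nil p1.support_ne_nil]
          rw [this]
          simp [hs]
        · have : (Walk.cons e h p1).support.dropLast = u :: p1.support.dropLast := by
            rw [support_cons, List.dropLast_cons_of_ne_nil p1.support_ne_nil]
          rw [this]
          simp [hxu, hnx]

end Walk

lemma closed_isNeg_eq_false (hG : G.IsBalanced) :
    ∀ (n : ℕ) {v : V} (p : G.Walk v v), p.edges.length ≤ n → p.isNeg = false := by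
  classical
  intro n
  induction n with
  | zero =>
      intro v p hlen
      have : p.edges = [] := List.eq_nil_of_length_eq_zero (Nat.le_zero.mp hlen)
      simp [Walk.isNeg_eq, this]
  | succ n ih =>
      intro v p hlen
      cases p with
      | nil => rfl
      | @cons u v1 w e h q =>
        by_cases hnd : q.support.Nodup
        · by_cases he : e ∈ q.edges
          · have ha : v1 ∈ G.ends e := by rw [h]; simp
            obtain ⟨c, h', q', rfl⟩ := q.eq_cons_of_mem_edges hnd e he ha
            have hc : c = v := by
              rcases Sym2.eq_iff.mp (h.symm.trans h') with ⟨h1, h2⟩ | ⟨h1, h2⟩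
              · exact (h1.trans h2).symm
              · exact h1.symm
            subst hc
            have hq' : q'.isNeg = false := by
              apply ih
              simp only [Walk.edges_cons, List.length_cons] at hlen ⊢
              omega
            simp only [Walk.isNeg_eq, Walk.edges_cons, eSign_cons] at hq' ⊢
            rw [hq']
            cases G.neg e <;> rfl
          · apply hG v (.cons e h q)
            · exact ⟨by simp, by simp [he, q.edges_nodup_of_support_nodup hnd], by simpa using hnd⟩
            · intro u _; trivial
        · obtain ⟨x, hdup⟩ := List.exists_duplicate_iff_not_nodup.mpr hnd
          have hcount : 2 ≤ q.support.count x := List.duplicate_iff_two_le_count.mp hdup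
          have hxq : x ∈ q.support := hdup.mem
          obtain ⟨q1, q2, heq, hsq, hnx⟩ := q.split_at x hxq
          have hcount2 : 2 ≤ q2.support.count x := by
            rw [← hsq, List.count_append, List.count_eq_zero_of_not_mem hnx] at hcount
            omega
          have hxt : x ∈ q2.support.tail := by
            rw [q2.support_eq_cons] at hcount2
            simp only [List.count_cons_self] at hcount2
            exact List.count_pos_iff.mp (by omega)
          cases q2 with
          | nil => simp at hxt
          | @cons _ y _ e2 h2 r =>
            have hxr : x ∈ r.support := by simpa using hxt
            obtain ⟨r1, r2, her, _, _⟩ := r.split_at x hxr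
            have houter : (Walk.cons e h (q1.append r2)).isNeg = false := by
              apply ih
              simp only [Walk.edges_cons, List.length_cons, Walk.append_edges,
                List.length_append] at hlen ⊢
              have e1 : q1.edges.length + (r1.edges.length + 1 + r2.edges.length)
                  = q.edges.length := by
                rw [← heq]
                simp only [List.length_append, Walk.edges_cons, List.length_cons, ← her,
                  List.length_append]
                omega
              omega
            have hc : (Walk.cons e2 h2 r1).isNeg = false := by
              apply ih
              simp only [Walk.edges_cons, List.length_cons] at hlen ⊢
              have e1 : q1.edges.length + (r1.edges.length + 1 + r2.edges.length)
                  = q.edges.length := by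
                rw [← heq]
                simp only [List.length_append, Walk.edges_cons, List.length_cons, ← her,
                  List.length_append]
                omega
              omega
            simp only [Walk.isNeg_eq, Walk.edges_cons, eSign_cons, Walk.append_edges,
              eSign_append] at houter hc ⊢
            rw [← heq]
            simp only [eSign_append, ← her, Walk.edges_cons, eSign_cons, eSign_append]
            revert houter hc
            generalize G.neg e = A
            generalize G.eSign q1.edges = B
            generalize G.neg e2 = D
            generalize G.eSign r1.edges = X
            generalize G.eSign r2.edges = Y
            revert A B D X Y
            decide

lemma isNeg_eq_of_balanced (hG : G.IsBalanced) {a b : V} (p q : G.Walk a b) :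
    p.isNeg = q.isNeg := by
  have := closed_isNeg_eq_false hG (p.append q.reverse).edges.length (p.append q.reverse) le_rfl
  simp only [Walk.isNeg_eq, Walk.append_edges, eSign_append] at this
  have h2 : G.eSign q.reverse.edges = G.eSign q.edges := by
    simpa [Walk.isNeg_eq] using q.reverse_isNeg
  rw [h2] at this
  simp only [Walk.isNeg_eq]
  revert this
  generalize G.eSign p.edges = A
  generalize G.eSign q.edges = B
  revert A B
  decide


lemma sym2_exists_rep (z : Sym2 V) : ∃ u v : V, z = s(u, v) := by
  induction z using Sym2.ind with
  | _ x y => exact ⟨x, y, rfl⟩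

lemma switch_neg_eq (s : V → Bool) (e : G.E) :
    (G.switch s).neg e = Bool.xor (G.neg e)
      (Sym2.lift ⟨fun u v => Bool.xor (s u) (s v), fun u v => Bool.xor_comm _ _⟩ (G.ends e)) := rfl

lemma neg_eq_of_switch_pos {s : V → Bool} (hs : ∀ e, (G.switch s).neg e = false)
    (e : G.E) (u v : V) (h : G.ends e = s(u, v)) : G.neg e = Bool.xor (s u) (s v) := by
  have := hs e
  rw [switch_neg_eq, h, Sym2.lift_mk] at this
  change Bool.xor (G.neg e) (Bool.xor (s u) (s v)) = false at this
  revert this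
  generalize G.neg e = A
  generalize s u = B
  generalize s v = C
  revert A B C
  decide

def Walk.copy {a b v : V} (p : G.Walk a v) (h : a = b) : G.Walk b v := h ▸ p

lemma Walk.copy_isNeg {a b v : V} (p : G.Walk a v) (h : a = b) :
    (p.copy h).isNeg = p.isNeg := by subst h; rfl

lemma balanced_of_switch_pos {s : V → Bool} (hs : ∀ e, (G.switch s).neg e = false) :
    G.IsBalanced := by
  have hw : ∀ {a b : V} (p : G.Walk a b), p.isNeg = Bool.xor (s a) (s b) := by
    intro a b p
    induction p with
    | nil => simp [Walk.isNeg_eq]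
    | @cons a c b e h q ih =>
        rw [Walk.isNeg_eq, Walk.edges_cons, eSign_cons, ← Walk.isNeg_eq, ih,
          G.neg_eq_of_switch_pos hs e _ _ h]
        cases s a <;> cases s c <;> cases s b <;> rfl
  intro v p _ _
  rw [hw p]
  simp

lemma exists_switch_pos (hG : G.IsBalanced) :
    ∃ s : V → Bool, ∀ e : G.E, (G.switch s).neg e = false := by
  classical
  let st : Setoid V := ⟨fun u v => Nonempty (G.Walk u v),
    ⟨fun v => ⟨.nil⟩, fun ⟨p⟩ => ⟨p.reverse⟩, fun ⟨p⟩ ⟨q⟩ => ⟨p.append q⟩⟩⟩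
  have hwalk : ∀ v : V, Nonempty (G.Walk (Quotient.out (Quotient.mk st v)) v) :=
    fun v => Quotient.exact (s := st) (Quotient.out_eq _)
  refine ⟨fun v => ((hwalk v).some).isNeg, fun e => ?_⟩
  obtain ⟨u, v, huv⟩ := sym2_exists_rep (G.ends e)
  have hout : Quotient.out (Quotient.mk st u) = Quotient.out (Quotient.mk st v) := by
    have : Quotient.mk st u = Quotient.mk st v :=
      Quotient.sound (⟨Walk.cons e huv Walk.nil⟩ : Nonempty (G.Walk u v))
    rw [this]
  have hsign := isNeg_eq_of_balanced hG
    ((((hwalk u).some).append (Walk.cons e huv Walk.nil)).copy hout) ((hwalk v).some)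
  rw [Walk.copy_isNeg] at hsign
  have hsign2 : (((hwalk u).some).append (Walk.cons e huv Walk.nil)).isNeg
      = Bool.xor ((hwalk u).some).isNeg (G.neg e) := by
    simp [Walk.isNeg_eq, eSign_append]
  rw [hsign2] at hsign
  rw [switch_neg_eq, huv, Sym2.lift_mk]
  change Bool.xor (G.neg e)
    (Bool.xor ((hwalk u).some).isNeg ((hwalk v).some).isNeg) = false
  rw [← hsign]
  generalize ((hwalk u).some).isNeg = A
  cases A <;> cases G.neg e <;> rfl

end SGraph

/-- a signed graph is balanced iff some switching makes every edge
positive, iff the set of negative edges is an edge cut. -/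
theorem stmt6 {V : Type} (G : SGraph V) :
    (G.IsBalanced ↔ ∃ s : V → Bool, ∀ e : G.E, (G.switch s).neg e = false) ∧
    (G.IsBalanced ↔ ∃ S : Set V, ∀ e : G.E,
      (G.neg e = true ↔ ∃ u v : V, G.ends e = s(u, v) ∧ u ∈ S ∧ v ∉ S)) := by
  classical
  have key1 : G.IsBalanced ↔ ∃ s : V → Bool, ∀ e : G.E, (G.switch s).neg e = false :=
    ⟨fun h => G.exists_switch_pos h, fun ⟨_, hs⟩ => balanced_of_switch_pos hs⟩
  refine ⟨key1, key1.trans ?_⟩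
  constructor
  · rintro ⟨s, hs⟩
    refine ⟨{v | s v = true}, fun e => ?_⟩
    obtain ⟨u, v, huv⟩ := sym2_exists_rep (G.ends e)
    have hne := G.neg_eq_of_switch_pos hs e u v huv
    constructor
    · intro h
      cases hsu : s u <;> cases hsv : s v <;> rw [hsu, hsv] at hne
      · rw [hne] at h; exact absurd h (by simp)
      · exact ⟨v, u, huv.trans (Sym2.eq_swap), by simpa using hsv, by simp [hsu]⟩
      · exact ⟨u, v, huv, by simpa using hsu, by simp [hsv]⟩
      · rw [hne] at h; exact absurd h (by simp)
    · rintro ⟨a, b, hab, haS, hbS⟩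
      simp only [Set.mem_setOf_eq] at haS hbS
      rcases Sym2.eq_iff.mp (huv.symm.trans hab) with ⟨rfl, rfl⟩ | ⟨rfl, rfl⟩
      · rw [Bool.not_eq_true] at hbS
        rw [hne, haS, hbS]; rfl
      · rw [Bool.not_eq_true] at hbS
        rw [hne, haS, hbS]; rfl
  · rintro ⟨S, hS⟩
    refine ⟨fun v => decide (v ∈ S), fun e => ?_⟩
    obtain ⟨u, v, huv⟩ := sym2_exists_rep (G.ends e)
    rw [switch_neg_eq, huv, Sym2.lift_mk]
    by_cases hu : u ∈ S <;> by_cases hv : v ∈ S <;>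
      simp only [hu, hv, decide_true, decide_false]
    · have hne : G.neg e = false := by
        by_contra hne
        rw [Bool.not_eq_false] at hne
        obtain ⟨a, b, hab, haS, hbS⟩ := (hS e).mp hne
        rcases Sym2.eq_iff.mp (huv.symm.trans hab) with ⟨rfl, rfl⟩ | ⟨rfl, rfl⟩
        · exact hbS hv
        · exact hbS hu
      rw [hne]; rfl
    · have hne : G.neg e = true := (hS e).mpr ⟨u, v, huv, hu, hv⟩
      rw [hne]; rfl
    · have hne : G.neg e = true := (hS e).mpr ⟨v, u, huv.trans (Sym2.eq_swap), hv, hu⟩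
      rw [hne]; rfl
    · have hne : G.neg e = false := by
        by_contra hne
        rw [Bool.not_eq_false] at hne
        obtain ⟨a, b, hab, haS, hbS⟩ := (hS e).mp hne
        rcases Sym2.eq_iff.mp (huv.symm.trans hab) with ⟨rfl, rfl⟩ | ⟨rfl, rfl⟩
        · exact hu haS
        · exact hv haS
      rw [hne]; rfl
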